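/- A chain map f: X → Y between chain complexes over a field k which has the left lifting property with respect to all maps D^n → 0 (n ∈ ℤ) is a monomorphism. -/

import Mathlib

open CategoryTheory CategoryTheory.Limits

/-- The sphere chain complex `S^n(V)`: `V` concentrated in degree `n`. -/
noncomputable def sphere {k : Type} [CommRing k] (V : ModuleCat k) (n : ℤ) :
    ChainComplex (ModuleCat k) ℤ :=
  (HomologicalComplex.single (ModuleCat k) (ComplexShape.down ℤ) n).obj V

/-- Degree-`i` component of the disk complex `D^n(V)`. -/
noncomputable def diskX {k : Type} [CommRing k] (V : ModuleCat k) (n i : ℤ) : ModuleCat k :=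
  if i = n ∨ i = n - 1 then V else ModuleCat.of k PUnit

/-- The disk chain complex `D^n(V)`: `V` in degrees `n` and `n-1`, with identity
differential. -/
noncomputable def disk {k : Type} [CommRing k] (V : ModuleCat k) (n : ℤ) :
    ChainComplex (ModuleCat k) ℤ where
  X i := diskX V n i
  d i j :=
    if h : i = n ∧ j = n - 1 then
      eqToHom (show diskX V n i = diskX V n j by
        rw [diskX, diskX, if_pos (Or.inl h.1), if_pos (Or.inr h.2)])
    else 0
  shape i j hij := by
    try dsimp only
    rw [dif_neg]
    rintro ⟨h1, h2⟩
    exact hij (by first | (simp only [ComplexShape.down_Rel]; omega) | (dsimp [ComplexShape.down]; omega))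
  d_comp_d' i j l _ _ := by
    try dsimp only
    by_cases h : i = n ∧ j = n - 1
    · rw [dif_neg (by omega : ¬ (j = n ∧ l = n - 1))]
      simp
    · rw [dif_neg h]
      simp

/-- The canonical projection `D^n(V) ⟶ S^n(V)`, the identity in degree `n`. -/
noncomputable def diskToSphere {k : Type} [CommRing k] (V : ModuleCat k) (n : ℤ) :
    disk V n ⟶ sphere V n :=
  HomologicalComplex.mkHomToSingle
    (eqToHom (show (disk V n).X n = V by
      simp [disk, diskX]))
    (fun i hi => by
      have : ¬ (i = n ∧ n = n - 1) := by omega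
      simp only [disk, dif_neg this, zero_comp] <;> first | rfl | simp)

/-- The canonical inclusion `S^n(V) ⟶ D^{n+1}(V)`, the identity in degree `n`. -/
noncomputable def sphereToDisk {k : Type} [CommRing k] (V : ModuleCat k) (n : ℤ) :
    sphere V n ⟶ disk V (n + 1) :=
  HomologicalComplex.mkHomFromSingle
    (eqToHom (show V = (disk V (n+1)).X n by
      simp [disk, diskX]))
    (fun j hj => by
      have : ¬ (n = n + 1 ∧ j = n + 1 - 1) := by omega
      simp only [disk, dif_neg this, comp_zero] <;> first | rfl | simp)

/-- A chain map `X ⟶ D^{n+1}(V)` from a linear functional on `X_n`. -/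
noncomputable def toDisk {k : Type} [CommRing k] {V : ModuleCat k}
    (X : ChainComplex (ModuleCat k) ℤ) (n : ℤ) (φ : X.X n ⟶ V) :
    X ⟶ disk V (n + 1) where
  f i :=
    if h1 : i = n + 1 then
      eqToHom (by rw [h1]) ≫ X.d (n+1) n ≫ φ ≫
        eqToHom (show V = (disk V (n+1)).X i by simp [disk, diskX, h1])
    else if h2 : i = n then
      eqToHom (by rw [h2]) ≫ φ ≫
        eqToHom (show V = (disk V (n+1)).X i by simp [disk, diskX, h2])
    else 0
  comm' i j hij := by
    simp only [ComplexShape.down_Rel] at hij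
    by_cases hi1 : i = n + 1
    · have hj : j = n := by omega
      subst hj
      subst hi1
      rw [dif_pos rfl, dif_neg (by omega), dif_pos rfl]
      have hd : (disk V (j+1)).d (j+1) j =
          eqToHom (show (disk V (j+1)).X (j+1) = (disk V (j+1)).X j by
            simp [disk, diskX]) := by
        show dite _ _ _ = _
        exact dif_pos ⟨rfl, by omega⟩
      rw [hd]
      simp [Category.assoc, eqToHom_trans]
    · have hd : (disk V (n+1)).d i j = 0 := by
        show dite _ _ _ = _
        exact dif_neg (by omega)
      rw [hd, comp_zero]
      by_cases hj1 : j = n + 1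
      · subst hj1
        have hi : i = n + 1 + 1 := by omega
        subst hi
        rw [dif_pos rfl]
        simp only [eqToHom_refl, Category.id_comp]
        rw [← Category.assoc, X.d_comp_d]
        simp
      · rw [dif_neg hj1, dif_neg (by omega), comp_zero]

open ZeroObject in
/-- A chain map over a field with the left lifting property with respect to all maps
`D^n ⟶ 0` (`n ∈ ℤ`) is a monomorphism. -/
theorem mono_of_llp_disk_to_zero (k : Type) [Field k]
    {X Y : ChainComplex (ModuleCat k) ℤ} (f : X ⟶ Y)
    (h : ∀ n : ℤ, HasLiftingProperty f
      (0 : disk (ModuleCat.of k k) n ⟶ (0 : ChainComplex (ModuleCat k) ℤ))) :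
    Mono f := by
  have key : ∀ n : ℤ, Mono (f.f n) := by
    intro n
    rw [ModuleCat.mono_iff_injective]
    rw [injective_iff_map_eq_zero]
    intro x hx
    rw [← Module.forall_dual_apply_eq_zero_iff k x]
    intro φ
    haveI := h (n + 1)
    set V : ModuleCat k := ModuleCat.of k k
    let g : X ⟶ disk V (n+1) := toDisk X n (ModuleCat.ofHom φ : X.X n ⟶ V)
    have sq : CommSq g f (0 : disk V (n+1) ⟶ 0) (0 : Y ⟶ 0) := ⟨by simp⟩
    have fac : f ≫ sq.lift = g := sq.fac_left
    have hc := congrArg (fun m => HomologicalComplex.Hom.f m n) fac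
    simp only [HomologicalComplex.comp_f] at hc
    have e : V = (disk V (n+1)).X n := by simp [disk, diskX]
    have hg : g.f n = (ModuleCat.ofHom φ : X.X n ⟶ V) ≫ eqToHom e := by
      show (if h1 : n = n + 1 then _ else if h2 : n = n then _ else _) = _
      rw [dif_neg (by omega), dif_pos rfl]
      simp
    rw [hg] at hc
    have hx' : (f.f n ≫ sq.lift.f n) x = 0 := by
      have : (f.f n ≫ sq.lift.f n) x = (sq.lift.f n) ((f.f n) x) := rfl
      rw [this, hx, map_zero]
    rw [hc] at hx'
    have hφ : eqToHom e (φ x) = 0 := hx'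
    have hinj : Function.Injective (eqToHom e) :=
      (ConcreteCategory.bijective_of_isIso (eqToHom e)).1
    have : eqToHom e (φ x) = eqToHom e 0 := by rw [hφ, map_zero]
    exact hinj this
  constructor
  intro Z g1 g2 hgg
  ext n : 1
  have hc := congrArg (fun m => HomologicalComplex.Hom.f m n) hgg
  simp only [HomologicalComplex.comp_f] at hc
  exact (cancel_mono (f.f n)).1 hc
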